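/- Let f be the rank function of the Vámos matroid on E = {0,1,2,3,4,5,6,7}. Then for every nonempty finite set Z disjoint from E there is no polymatroid g on E ∪ Z that extends f and is an AK extension of f for the pair ({2,3,4,5}, {0,1}). (In particular, the Vámos matroid does not satisfy the Ahlswede–Körner property.) -/
import Mathlib


open Finset

/-- A polymatroid on a finite ground set `E`. -/
def IsPolymatroid {α : Type*} [DecidableEq α] (E : Finset α) (f : Finset α → ℝ) : Prop :=
  f ∅ = 0 ∧
  (∀ ⦃X Y : Finset α⦄, X ⊆ Y → Y ⊆ E → f X ≤ f Y) ∧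
  (∀ ⦃X Y : Finset α⦄, X ⊆ E → Y ⊆ E → f (X ∪ Y) + f (X ∩ Y) ≤ f X + f Y)

/-- Ahlswede–Körner extension condition for the pair `(X, Y)`. -/
def IsAKExtension {α : Type*} [DecidableEq α] (Z : Finset α) (g : Finset α → ℝ)
    (X Y : Finset α) : Prop :=
  g (Z ∪ X) = g X ∧ ∀ X' ⊆ X, g (X' ∪ Z) - g Z = g (X' ∪ Y) - g Y

/-- The circuit-hyperplanes of the Vámos matroid. -/
def vamosCH : Finset (Finset ℕ) :=
  {{0, 1, 2, 3}, {0, 1, 4, 5}, {2, 3, 6, 7}, {4, 5, 6, 7}, {2, 3, 4, 5}}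

/-- The rank function of the Vámos matroid on `{0, 1, …, 7}`:
`f(X) = |X|` if `|X| ≤ 3`, `f(X) = 3` if `X` is a circuit-hyperplane, and `f(X) = 4`
otherwise when `|X| ≥ 4`. -/
noncomputable def vamosRank (X : Finset ℕ) : ℝ :=
  if X ∈ vamosCH then 3 else min X.card 4

/-- The ground set of the Vámos matroid. -/
def vamosE : Finset ℕ := {0, 1, 2, 3, 4, 5, 6, 7}

/-- The Vámos matroid admits no AK extension for the pair `({2,3,4,5}, {0,1})`;
in particular it does not satisfy the Ahlswede–Körner property. -/
theorem stmt_8 :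
    ∀ Z : Finset ℕ, Z.Nonempty → Disjoint Z vamosE →
      ¬ ∃ g : Finset ℕ → ℝ, IsPolymatroid (vamosE ∪ Z) g ∧
        (∀ S ⊆ vamosE, g S = vamosRank S) ∧
        IsAKExtension Z g {2, 3, 4, 5} {0, 1} := by
  intro Z hZne hdisj
  rintro ⟨g, ⟨h0, hmono, hsub⟩, hext, hAK1, hAK2⟩
  -- helpers
  have hZint : ∀ S T : Finset ℕ, T ⊆ vamosE → S ⊆ T → (Z ∪ S) ∩ T = S := by
    intro S T hTE hST
    rw [Finset.union_inter_distrib_right, Finset.inter_eq_left.mpr hST,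
      Finset.disjoint_iff_inter_eq_empty.mp (hdisj.mono_right hTE), Finset.empty_union]
  have hZsub : ∀ S : Finset ℕ, S ⊆ vamosE → Z ∪ S ⊆ vamosE ∪ Z := by
    intro S hS
    exact Finset.union_subset (Finset.subset_union_right) (hS.trans Finset.subset_union_left)
  have hZU : ∀ S T : Finset ℕ, S ∪ T = T → (Z ∪ S) ∪ T = Z ∪ T := by
    intro S T h; rw [Finset.union_assoc, h]
  have hZZ : ∀ S T : Finset ℕ, (Z ∪ S) ∪ (Z ∪ T) = Z ∪ (S ∪ T) := by
    intro S T; rw [← Finset.union_union_distrib_left]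
  have hZI : ∀ S T : Finset ℕ, (Z ∪ S) ∩ (Z ∪ T) = Z ∪ (S ∩ T) := by
    intro S T; rw [← Finset.union_inter_distrib_left]
  -- values of g on subsets of E
  have v1 : g {2, 3} = 2 := by
    rw [hext _ (by decide)]; unfold vamosRank; rw [if_neg (by decide),
      show ({2,3} : Finset ℕ).card = 2 from by decide]; norm_num
  have v2 : g {4, 5} = 2 := by
    rw [hext _ (by decide)]; unfold vamosRank; rw [if_neg (by decide),
      show ({4,5} : Finset ℕ).card = 2 from by decide]; norm_num
  have v3 : g {0, 1} = 2 := by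
    rw [hext _ (by decide)]; unfold vamosRank; rw [if_neg (by decide),
      show ({0,1} : Finset ℕ).card = 2 from by decide]; norm_num
  have v4 : g {0, 1, 2, 3} = 3 := by
    rw [hext _ (by decide)]; unfold vamosRank; rw [if_pos (by decide)]
  have v5 : g {0, 1, 4, 5} = 3 := by
    rw [hext _ (by decide)]; unfold vamosRank; rw [if_pos (by decide)]
  have v6 : g {2, 3, 6, 7} = 3 := by
    rw [hext _ (by decide)]; unfold vamosRank; rw [if_pos (by decide)]
  have v7 : g {4, 5, 6, 7} = 3 := by
    rw [hext _ (by decide)]; unfold vamosRank; rw [if_pos (by decide)]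
  have v8 : g {2, 3, 4, 5} = 3 := by
    rw [hext _ (by decide)]; unfold vamosRank; rw [if_pos (by decide)]
  have v9 : g {0, 1, 2, 3, 4, 5} = 4 := by
    rw [hext _ (by decide)]; unfold vamosRank; rw [if_neg (by decide),
      show ({0,1,2,3,4,5} : Finset ℕ).card = 6 from by decide]; norm_num
  have v10 : g {2, 3, 4, 5, 6, 7} = 4 := by
    rw [hext _ (by decide)]; unfold vamosRank; rw [if_neg (by decide),
      show ({2,3,4,5,6,7} : Finset ℕ).card = 6 from by decide]; norm_num
  have v11 : g {0, 1, 6, 7} = 4 := by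
    rw [hext _ (by decide)]; unfold vamosRank; rw [if_neg (by decide),
      show ({0,1,6,7} : Finset ℕ).card = 4 from by decide]; norm_num
  -- AK conditions give g(Z), g(Z ∪ {2,3}), g(Z ∪ {4,5})
  have a1 := hAK2 {2, 3, 4, 5} (by decide)
  rw [show ({2,3,4,5} : Finset ℕ) ∪ {0,1} = {0,1,2,3,4,5} from by decide,
    Finset.union_comm, hAK1, v8, v9, v3] at a1
  have hgZ : g Z = 1 := by linarith
  have a2 := hAK2 {2, 3} (by decide)
  rw [show ({2,3} : Finset ℕ) ∪ {0,1} = {0,1,2,3} from by decide,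
    Finset.union_comm, v4, v3, hgZ] at a2
  have hgZc : g (Z ∪ {2, 3}) = 2 := by linarith
  have a3 := hAK2 {4, 5} (by decide)
  rw [show ({4,5} : Finset ℕ) ∪ {0,1} = {0,1,4,5} from by decide,
    Finset.union_comm, v5, v3, hgZ] at a3
  have hgZd : g (Z ∪ {4, 5}) = 2 := by linarith
  -- submodularity: Z ∪ {2,3} with {0,1,2,3}
  have s1 := hsub (hZsub {2,3} (by decide)) (show ({0,1,2,3} : Finset ℕ) ⊆ vamosE ∪ Z from
    le_trans (by decide) Finset.subset_union_left)
  rw [hZU {2,3} {0,1,2,3} (by decide), hZint {2,3} {0,1,2,3} (by decide) (by decide),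
    hgZc, v4, v1] at s1
  have s2 := hsub (hZsub {4,5} (by decide)) (show ({0,1,4,5} : Finset ℕ) ⊆ vamosE ∪ Z from
    le_trans (by decide) Finset.subset_union_left)
  rw [hZU {4,5} {0,1,4,5} (by decide), hZint {4,5} {0,1,4,5} (by decide) (by decide),
    hgZd, v5, v2] at s2
  have s3 := hsub (hZsub {2,3} (by decide)) (show ({2,3,6,7} : Finset ℕ) ⊆ vamosE ∪ Z from
    le_trans (by decide) Finset.subset_union_left)
  rw [hZU {2,3} {2,3,6,7} (by decide), hZint {2,3} {2,3,6,7} (by decide) (by decide),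
    hgZc, v6, v1] at s3
  have s4 := hsub (hZsub {4,5} (by decide)) (show ({4,5,6,7} : Finset ℕ) ⊆ vamosE ∪ Z from
    le_trans (by decide) Finset.subset_union_left)
  rw [hZU {4,5} {4,5,6,7} (by decide), hZint {4,5} {4,5,6,7} (by decide) (by decide),
    hgZd, v7, v2] at s4
  -- submodularity: (Z ∪ {0,1,2,3}) with (Z ∪ {0,1,4,5})
  have s5 := hsub (hZsub {0,1,2,3} (by decide)) (hZsub {0,1,4,5} (by decide))
  rw [hZZ, hZI, show ({0,1,2,3} : Finset ℕ) ∪ {0,1,4,5} = {0,1,2,3,4,5} from by decide,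
    show ({0,1,2,3} : Finset ℕ) ∩ {0,1,4,5} = {0,1} from by decide] at s5
  have m1 : g {0,1,2,3,4,5} ≤ g (Z ∪ {0,1,2,3,4,5}) :=
    hmono (Finset.subset_union_right) (hZsub _ (by decide))
  -- submodularity: (Z ∪ {2,3,6,7}) with (Z ∪ {4,5,6,7})
  have s6 := hsub (hZsub {2,3,6,7} (by decide)) (hZsub {4,5,6,7} (by decide))
  rw [hZZ, hZI, show ({2,3,6,7} : Finset ℕ) ∪ {4,5,6,7} = {2,3,4,5,6,7} from by decide,
    show ({2,3,6,7} : Finset ℕ) ∩ {4,5,6,7} = {6,7} from by decide] at s6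
  have m2 : g {2,3,4,5,6,7} ≤ g (Z ∪ {2,3,4,5,6,7}) :=
    hmono (Finset.subset_union_right) (hZsub _ (by decide))
  -- submodularity: (Z ∪ {0,1}) with (Z ∪ {6,7})
  have s7 := hsub (hZsub {0,1} (by decide)) (hZsub {6,7} (by decide))
  rw [hZZ, hZI, show ({0,1} : Finset ℕ) ∪ {6,7} = {0,1,6,7} from by decide,
    show ({0,1} : Finset ℕ) ∩ {6,7} = ∅ from by decide, Finset.union_empty, hgZ] at s7
  have m3 : g {0,1,6,7} ≤ g (Z ∪ {0,1,6,7}) :=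
    hmono (Finset.subset_union_right) (hZsub _ (by decide))
  linarith
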